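/- Suppose two jump points s₁ < s₂ are added into one open interval I_{α₀} = (t_{α₀}, t_{α₀+1}), producing subintervals I¹ = (t_{α₀},s₁), I² = (s₁,s₂), I³ = (s₂,t_{α₀+1}), I⁴ = {s₁}, I⁵ = {s₂}. Let σ be a bijection of ℝ with both 𝒜 and 𝒜_S invariant under σ and σ⁻¹, and assume σ(I¹) = I², σ(I²) = I³, σ(I³) = I¹, σ(I⁴) = I⁵, σ(I⁵) = I⁴. Then for every n ∈ ℤ: Sepⁿ_{𝒜_S}(ℝ) = Sepⁿ_𝒜(ℝ) ∪ (I⁴ ∪ I⁵) if n is odd and 3 ∣ n; Sepⁿ_{𝒜_S}(ℝ) = Sepⁿ_𝒜(ℝ) ∪ (I¹ ∪ I² ∪ I³) ∪ (I⁴ ∪ I⁵ if n is odd) if 3 ∤ n; and Sepⁿ_{𝒜_S}(ℝ) = Sepⁿ_𝒜(ℝ) if n is even and 3 ∣ n. Consequently 𝒜_S′ = 𝒜′ \ ({Σₙ fₙδⁿ ∈ 𝒜′ : fₙ ≠ 0 on I¹ ∪ I² ∪ I³ for some n with 3 ∤ n} ∪ {Σₙ fₙδⁿ ∈ 𝒜′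 : f_{2n+1} ≠ 0 on I⁴ ∪ I⁵ for some n}). -/

import Mathlib

open scoped Classical

noncomputable section

namespace PaperTRS

/-- The algebra of complex valued functions constant on each set of the family `P`. -/
def partAlg {X J : Type*} (P : J → Set X) : Subalgebra ℂ (X → ℂ) where
  carrier := {h | ∀ i, ∀ x ∈ P i, ∀ y ∈ P i, h x = h y}
  mul_mem' := by
    intro a b ha hb i x hx y hy
    simp only [Pi.mul_apply, ha i x hx y hy, hb i x hx y hy]
  add_mem' := by
    intro a b ha hb i x hx y hy
    simp only [Pi.add_apply, ha i x hx y hy, hb i x hx y hy]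
  algebraMap_mem' := by intro r i x hx y hy; rfl

/-- Piecewise constant functions on `ℝ` whose jumps all lie in the set `T`. -/
def pcAlgOn (T : Set ℝ) : Subalgebra ℂ (ℝ → ℂ) where
  carrier := {h | ∀ x y : ℝ, x ∉ T → y ∉ T →
    (∀ u ∈ T, u ∉ Set.Icc (min x y) (max x y)) → h x = h y}
  mul_mem' := by
    intro a b ha hb x y hx hy hxy
    simp only [Pi.mul_apply, ha x y hx hy hxy, hb x y hx hy hxy]
  add_mem' := by
    intro a b ha hb x y hx hy hxy
    simp only [Pi.add_apply, ha x y hx hy hxy, hb x y hx hy hxy]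
  algebraMap_mem' := by intro r x y _ _ _; rfl

/-- Invariance of an algebra of functions under a self-map of `X`. -/
def AlgInvariant {X : Type*} (A : Subalgebra ℂ (X → ℂ)) (σ : X → X) : Prop :=
  ∀ h ∈ A, (h ∘ σ) ∈ A

/-- `Sep A σ n = {x | ∃ h ∈ A, h x ≠ σ̃ⁿ(h) x}`, where `σ̃ⁿ(h) = h ∘ σ⁻ⁿ`. -/
def Sep {X : Type*} (A : Subalgebra ℂ (X → ℂ)) (σ : Equiv.Perm X) (n : ℤ) : Set X :=
  {x | ∃ h ∈ A, h x ≠ h ((σ ^ n)⁻¹ x)}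

/-- Twisted convolution product on the crossed product `⋊ ℤ`:
`(fₙ δⁿ) * (gₘ δᵐ) = fₙ · σ̃ⁿ(gₘ) · δ^{n+m}` extended bilinearly. -/
def cmul {X : Type*} (σ : Equiv.Perm X) (f g : ℤ →₀ (X → ℂ)) : ℤ →₀ (X → ℂ) :=
  f.sum fun n a => g.sum fun m b =>
    Finsupp.single (n + m) (fun x => a x * b ((σ ^ n)⁻¹ x))

/-- Membership of an element `Σ fₙ δⁿ` in the crossed product of the algebra `B` with `ℤ`. -/
def InCrossed {X : Type*} (B : Subalgebra ℂ (X → ℂ)) (f : ℤ →₀ (X → ℂ)) : Prop :=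
  ∀ n, f n ∈ B

/-- The commutant of `A` inside the crossed product `B ⋊ ℤ` (where `A ⊆ B`). -/
def commutant {X : Type*} (A B : Subalgebra ℂ (X → ℂ)) (σ : Equiv.Perm X) :
    Set (ℤ →₀ (X → ℂ)) :=
  {f | InCrossed B f ∧
    ∀ a ∈ A, cmul σ f (Finsupp.single 0 a) = cmul σ (Finsupp.single 0 a) f}

/-- The jump points `t₁ < ⋯ < t_N` extended by `t₀ = -∞` and `t_{N+1} = +∞`. -/
def tE (N : ℕ) (t : Fin N → ℝ) (i : ℕ) : EReal :=
  if h : 1 ≤ i ∧ i ≤ N then ((t ⟨i - 1, by omega⟩ : ℝ) : EReal)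
  else if i = 0 then ⊥ else ⊤

/-- The open interval `I_i = (t_i, t_{i+1})` for `0 ≤ i ≤ N`. -/
def openPiece (N : ℕ) (t : Fin N → ℝ) (i : ℕ) : Set ℝ :=
  {x : ℝ | tE N t i < (x : EReal) ∧ (x : EReal) < tE N t (i + 1)}

/-- The sets of the partition of `ℝ` determined by the jump points: the open
intervals `I_0, …, I_N` together with the singletons `{t_i}`. -/
def pieces (N : ℕ) (t : Fin N → ℝ) : Set (Set ℝ) :=
  {P | (∃ i : ℕ, i ≤ N ∧ P = openPiece N t i) ∨ (∃ i : Fin N, P = {t i})}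

/-- `C_k`: points `x` such that `k` is the smallest positive integer with `x` and
`σᵏ(x)` in one common set of the partition. -/
def Ck (N : ℕ) (t : Fin N → ℝ) (σ : Equiv.Perm ℝ) (k : ℕ) : Set ℝ :=
  {x | IsLeast {j : ℕ | 0 < j ∧ ∃ P ∈ pieces N t, x ∈ P ∧ (σ ^ j) x ∈ P} k}

end PaperTRS
namespace PaperTRS

/-- With `p` points `s i 0 < ⋯ < s i (p-1)` added in the interval `I_{α i}`, the `j`-th
open subinterval of the refined partition of `I_{α i}`, for `j = 0, …, p`. -/
def subPiece (N : ℕ) (t : Fin N → ℝ) {k p : ℕ} (α : Fin k → ℕ)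
    (s : Fin k → Fin p → ℝ) (i : Fin k) (j : Fin (p + 1)) : Set ℝ :=
  {x : ℝ |
    (if hj : (j : ℕ) = 0 then tE N t (α i)
      else ((s i ⟨(j : ℕ) - 1, by have := j.isLt; omega⟩ : ℝ) : EReal)) < (x : EReal) ∧
    (x : EReal) <
      (if hj : (j : ℕ) = p then tE N t (α i + 1)
        else ((s i ⟨(j : ℕ), by have := j.isLt; omega⟩ : ℝ) : EReal))}

/-- The sets of the refined partition of the union of the intervals `I_{α i}`: the open
subintervals determined by the added jump points together with the singleton jump points. -/
def cyclePieces (N : ℕ) (t : Fin N → ℝ) {k p : ℕ} (α : Fin k → ℕ)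
    (s : Fin k → Fin p → ℝ) : Set (Set ℝ) :=
  {P | (∃ i j, P = subPiece N t α s i j) ∨ (∃ i j, P = ({s i j} : Set ℝ))}

/-- `C̃_r`: points `x` of `⋃ᵢ I_{α i}` such that `r` is the smallest positive integer with
`x` and `σʳ(x)` in one common set of the refined partition. -/
def Ctil (N : ℕ) (t : Fin N → ℝ) (σ : Equiv.Perm ℝ) {k p : ℕ} (α : Fin k → ℕ)
    (s : Fin k → Fin p → ℝ) (r : ℕ) : Set ℝ :=
  {x | x ∈ ⋃ i, openPiece N t (α i) ∧
    IsLeast {j : ℕ | 0 < j ∧ ∃ P ∈ cyclePieces N t α s, x ∈ P ∧ (σ ^ j) x ∈ P} r}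

/-- The cyclic setup: `k` pairwise distinct open intervals `I_{α 0}, …, I_{α (k-1)}` of the
original partition, contained in `C_k` and permuted cyclically by `σ`, with `p` jump points
`s i 0 < ⋯ < s i (p-1)` added into each of them, and both the original algebra `𝒜` and the
refined algebra `𝒜_S` invariant under `σ` and `σ⁻¹`. -/
def CyclicSetup (N : ℕ) (t : Fin N → ℝ) (σ : Equiv.Perm ℝ) {k p : ℕ} (α : Fin k → ℕ)
    (s : Fin k → Fin p → ℝ) : Prop :=
  0 < k ∧ (∀ i, α i ≤ N) ∧ Function.Injective α ∧
  (∀ i j, s i j ∈ openPiece N t (α i)) ∧ (∀ i, StrictMono (s i)) ∧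
  (∀ i : Fin k, ∃ i' : Fin k, ((i' : ℕ) = ((i : ℕ) + 1) % k) ∧
    σ '' openPiece N t (α i) = openPiece N t (α i')) ∧
  (∀ i, openPiece N t (α i) ⊆ Ck N t σ k) ∧
  AlgInvariant (pcAlgOn (Set.range t)) σ ∧
  AlgInvariant (pcAlgOn (Set.range t)) σ.symm ∧
  AlgInvariant (pcAlgOn (Set.range t ∪ ⋃ i, Set.range (s i))) σ ∧
  AlgInvariant (pcAlgOn (Set.range t ∪ ⋃ i, Set.range (s i))) σ.symm

/-- `C_k` for the partition `P` of a general set `X`. -/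
def CkGen {X ι : Type*} (P : ι → Set X) (σ : Equiv.Perm X) (k : ℕ) : Set X :=
  {x | IsLeast {j : ℕ | 0 < j ∧ ∃ i, x ∈ P i ∧ (σ ^ j) x ∈ P i} k}

/-- `C̃_r` relative to a family `Q` of refined pieces inside the subset `base` of `X`. -/
def CtilGen {X ι : Type*} (σ : Equiv.Perm X) (Q : ι → Set X) (base : Set X) (r : ℕ) :
    Set X :=
  {x | x ∈ base ∧ IsLeast {j : ℕ | 0 < j ∧ ∃ i, x ∈ Q i ∧ (σ ^ j) x ∈ Q i} r}

/-- `C_∞`: points that never return to the partition set they lie in. -/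
def Cinf {X ι : Type*} (P : ι → Set X) (σ : Equiv.Perm X) : Set X :=
  {x | ∀ k : ℕ, 0 < k → ¬∃ i, x ∈ P i ∧ (σ ^ k) x ∈ P i}

end PaperTRS
namespace PaperTRS

section SepChar

/-- The inseparability relation for `pcAlgOn T`. -/
def Rel (T : Set ℝ) (x y : ℝ) : Prop :=
  x = y ∨ (x ∉ T ∧ y ∉ T ∧ ∀ u ∈ T, u ∉ Set.Icc (min x y) (max x y))

lemma Rel.symm {T : Set ℝ} {x y : ℝ} (h : Rel T x y) : Rel T y x := by
  rcases h with h | ⟨hx, hy, hb⟩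
  · exact Or.inl h.symm
  · exact Or.inr ⟨hy, hx, by simpa [min_comm, max_comm] using hb⟩

lemma mem_pcAlgOn {T : Set ℝ} {h : ℝ → ℂ} : h ∈ pcAlgOn T ↔ ∀ x y : ℝ, x ∉ T → y ∉ T →
    (∀ u ∈ T, u ∉ Set.Icc (min x y) (max x y)) → h x = h y := Iff.rfl

lemma pcAlgOn_mono {T T' : Set ℝ} (hTT : T ⊆ T') {h : ℝ → ℂ} (hm : h ∈ pcAlgOn T) :
    h ∈ pcAlgOn T' :=
  fun x y hx hy hb => hm x y (fun h => hx (hTT h)) (fun h => hy (hTT h))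
    (fun u hu => hb u (hTT hu))

lemma single_ind_mem {T : Set ℝ} {c : ℝ} (hc : c ∈ T) :
    (fun z => if z = c then (1:ℂ) else 0) ∈ pcAlgOn T := by
  intro x y hx hy _
  simp only
  rw [if_neg (fun h : x = c => hx (h ▸ hc)), if_neg (fun h : y = c => hy (h ▸ hc))]

lemma iio_ind_mem {T : Set ℝ} {c : ℝ} (hc : c ∈ T) :
    (fun z => if z < c then (1:ℂ) else 0) ∈ pcAlgOn T := by
  intro x y _ _ hb
  have h := hb c hc
  simp only [Set.mem_Icc, not_and_or, not_le] at h
  simp only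
  rcases h with h | h
  · rw [if_neg (not_lt.mpr ((le_min_iff.mp h.le).1)),
      if_neg (not_lt.mpr ((le_min_iff.mp h.le).2))]
  · rw [if_pos (lt_of_le_of_lt (le_max_left x y) h),
      if_pos (lt_of_le_of_lt (le_max_right x y) h)]

lemma not_rel_sep {T : Set ℝ} {x y : ℝ} (hrel : ¬ Rel T x y) :
    ∃ h ∈ pcAlgOn T, h x ≠ h y := by
  by_cases hxy : x = y
  · exact absurd (Or.inl hxy) hrel
  by_cases hxT : x ∈ T
  · exact ⟨_, single_ind_mem hxT, by simp [Ne.symm hxy]⟩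
  by_cases hyT : y ∈ T
  · exact ⟨_, single_ind_mem hyT, by simp [hxy]⟩
  have hb : ∃ u ∈ T, u ∈ Set.Icc (min x y) (max x y) := by
    by_contra hc
    push_neg at hc
    exact hrel (Or.inr ⟨hxT, hyT, hc⟩)
  obtain ⟨u, huT, hu1, hu2⟩ := hb
  have hux : u ≠ x := fun h => hxT (h ▸ huT)
  have huy : u ≠ y := fun h => hyT (h ▸ huT)
  refine ⟨_, iio_ind_mem huT, ?_⟩
  rcases le_total x y with hle | hle
  · have h1 : x < u := lt_of_le_of_ne (by simpa [min_eq_left hle] using hu1) (Ne.symm hux)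
    have h2 : ¬ y < u := not_lt.mpr (by simpa [max_eq_right hle] using hu2)
    simp [h1, h2]
  · have h1 : y < u := lt_of_le_of_ne (by simpa [min_eq_right hle] using hu1) (Ne.symm huy)
    have h2 : ¬ x < u := not_lt.mpr (by simpa [max_eq_left hle] using hu2)
    simp [h1, h2]

lemma mem_Sep_iff (T : Set ℝ) (σ : Equiv.Perm ℝ) (n : ℤ) (x : ℝ) :
    x ∈ Sep (pcAlgOn T) σ n ↔ ¬ Rel T x ((σ ^ n)⁻¹ x) := by
  constructor
  · rintro ⟨h, hh, hne⟩ (heq | ⟨hx, hy, hb⟩)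
    · exact hne (heq ▸ rfl)
    · exact hne (hh _ _ hx hy hb)
  · intro hrel
    obtain ⟨h, hh, hne⟩ := not_rel_sep hrel
    exact ⟨h, hh, hne⟩

lemma Rel.mono {T T' : Set ℝ} (hTT : T ⊆ T') {x y : ℝ} (h : Rel T' x y) : Rel T x y := by
  rcases h with h | ⟨hx, hy, hb⟩
  · exact Or.inl h
  · exact Or.inr ⟨fun h => hx (hTT h), fun h => hy (hTT h), fun u hu => hb u (hTT hu)⟩

end SepChar

end PaperTRS
namespace PaperTRS

section Commutant

variable {X : Type*}

lemma finsupp_sum_single_eval (f : ℤ →₀ (X → ℂ)) (g : ℤ → (X → ℂ) → (X → ℂ))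
    (hg : ∀ n, g n 0 = 0) (n : ℤ) :
    (f.sum fun m fm => Finsupp.single m (g m fm)) n = g n (f n) := by
  classical
  rw [Finsupp.sum_apply]
  simp only [Finsupp.single_apply]
  rw [Finsupp.sum_ite_eq' f n (fun m fm => g m fm)]
  split_ifs with h
  · rfl
  · rw [Finsupp.notMem_support_iff.mp h, hg]

lemma cmul_single_right (σ : Equiv.Perm X) (f : ℤ →₀ (X → ℂ)) (a : X → ℂ) :
    cmul σ f (Finsupp.single 0 a) =
      f.sum fun m fm => Finsupp.single m (fun x => fm x * a ((σ ^ m)⁻¹ x)) := by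
  unfold cmul
  refine Finsupp.sum_congr fun m _ => ?_
  rw [Finsupp.sum_single_index
    (by rw [show (fun x => f m x * (0 : X → ℂ) ((σ ^ m)⁻¹ x)) = 0 from
        funext fun z => mul_zero _, Finsupp.single_zero])]
  rw [add_zero]

lemma cmul_single_left (σ : Equiv.Perm X) (f : ℤ →₀ (X → ℂ)) (a : X → ℂ) :
    cmul σ (Finsupp.single 0 a) f =
      f.sum fun m fm => Finsupp.single m (fun x => a x * fm x) := by
  unfold cmul
  rw [Finsupp.sum_single_index (by
    refine Finset.sum_eq_zero fun m _ => ?_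
    show Finsupp.single ((0:ℤ) + m)
      (fun x => (0 : X → ℂ) x * f m (((σ : Equiv.Perm X) ^ (0:ℤ))⁻¹ x)) = 0
    rw [show (fun x => (0 : X → ℂ) x * f m (((σ : Equiv.Perm X) ^ (0:ℤ))⁻¹ x)) = 0 from
      funext fun z => zero_mul _, Finsupp.single_zero])]
  refine Finsupp.sum_congr fun m _ => ?_
  rw [zero_add]
  congr 1

lemma mem_commutant_iff (A B : Subalgebra ℂ (X → ℂ)) (σ : Equiv.Perm X)
    (f : ℤ →₀ (X → ℂ)) :
    f ∈ commutant A B σ ↔ InCrossed B f ∧ ∀ n : ℤ, ∀ x ∈ Sep A σ n, f n x = 0 := by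
  unfold commutant
  simp only [Set.mem_setOf_eq]
  refine and_congr_right fun _ => ?_
  have key : ∀ a : X → ℂ,
      cmul σ f (Finsupp.single 0 a) = cmul σ (Finsupp.single 0 a) f ↔
      ∀ (n : ℤ) (x : X), f n x * a ((σ ^ n)⁻¹ x) = a x * f n x := by
    intro a
    rw [cmul_single_right, cmul_single_left]
    have hg1 : ∀ m : ℤ, (fun x => (0 : X → ℂ) x * a ((σ ^ m)⁻¹ x)) = 0 :=
      fun m => funext fun z => zero_mul _
    have hg2 : (fun x : X => a x * (0 : X → ℂ) x) = 0 :=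
      funext fun z => mul_zero _
    constructor
    · intro h n x
      have h1 : (f.sum fun m fm => Finsupp.single m (fun x => fm x * a ((σ ^ m)⁻¹ x))) n x
          = (f.sum fun m fm => Finsupp.single m (fun x => a x * fm x)) n x := by rw [h]
      rwa [finsupp_sum_single_eval f _ (fun m => hg1 m) n,
        finsupp_sum_single_eval f _ (fun m => hg2) n] at h1
    · intro h
      ext n x
      rw [finsupp_sum_single_eval f _ (fun m => hg1 m) n,
        finsupp_sum_single_eval f _ (fun m => hg2) n]
      exact h n x
  constructor
  · intro h n x hx
    obtain ⟨a, haA, hne⟩ := hx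
    have hc := (key a).mp (h a haA) n x
    have h2 : f n x * (a ((σ ^ n)⁻¹ x) - a x) = 0 := by linear_combination hc
    rcases mul_eq_zero.mp h2 with h3 | h3
    · exact h3
    · exact absurd (sub_eq_zero.mp h3).symm hne
  · intro h a haA
    rw [key a]
    intro n x
    by_cases hax : a x = a ((σ ^ n)⁻¹ x)
    · rw [← hax, mul_comm]
    · rw [h n x ⟨a, haA, fun hh => hax hh⟩]
      simp only [zero_mul, mul_zero]

end Commutant

end PaperTRS
namespace PaperTRS

section Dynamics

lemma zpow_succ_apply {X : Type*} (σ : Equiv.Perm X) (k : ℤ) (x : X) :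
    (σ ^ (k + 1)) x = σ ((σ ^ k) x) := by
  rw [add_comm, zpow_add, zpow_one, Equiv.Perm.mul_apply]

lemma zpow_pred_apply {X : Type*} (σ : Equiv.Perm X) (k : ℤ) (x : X) :
    (σ ^ (k - 1)) x = σ⁻¹ ((σ ^ k) x) := by
  rw [sub_eq_add_neg, add_comm, zpow_add, zpow_neg, zpow_one, Equiv.Perm.mul_apply]

lemma zpow_mem_class {X G : Type*} [AddCommGroupWithOne G] (σ : Equiv.Perm X) (P : G → Set X)
    (hf : ∀ c x, x ∈ P c → σ x ∈ P (c + 1))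
    (hb : ∀ c x, x ∈ P c → σ⁻¹ x ∈ P (c - 1)) :
    ∀ (n : ℤ) (c : G) (x : X), x ∈ P c → (σ ^ n) x ∈ P (c + (n : ℤ)) := by
  intro n
  induction n using Int.induction_on with
  | zero => intro c x hx; simpa using hx
  | succ k ih =>
      intro c x hx
      rw [zpow_succ_apply]
      have h := hf _ _ (ih c x hx)
      rw [show (c + (((k:ℤ)+1 : ℤ) : G)) = c + ((k:ℤ) : G) + 1 by push_cast; abel]
      exact h
  | pred k ih =>
      intro c x hx
      rw [show (-(k:ℤ) - 1 : ℤ) = (-(k:ℤ)) - 1 from rfl, zpow_pred_apply]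
      have h := hb _ _ (ih c x hx)
      rw [show (c + ((-(k:ℤ)-1 : ℤ) : G)) = c + ((-(k:ℤ) : ℤ) : G) - 1 by push_cast; abel]
      exact h

lemma zpow_swap {X : Type*} (σ : Equiv.Perm X) (s1 s2 : X) (h1 : σ s1 = s2)
    (h2 : σ s2 = s1) (n : ℤ) :
    ((σ ^ n) s1 = if Even n then s1 else s2) ∧
      ((σ ^ n) s2 = if Even n then s2 else s1) := by
  have hb1 : σ⁻¹ s1 = s2 := by rw [← h2, ← Equiv.Perm.mul_apply, inv_mul_cancel, Equiv.Perm.one_apply]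
  have hb2 : σ⁻¹ s2 = s1 := by rw [← h1, ← Equiv.Perm.mul_apply, inv_mul_cancel, Equiv.Perm.one_apply]
  induction n using Int.induction_on with
  | zero => simp
  | succ k ih =>
      rw [zpow_succ_apply, zpow_succ_apply, ih.1, ih.2]
      simp only [Int.even_add_one]
      by_cases hk : Even (k : ℤ) <;> simp [hk, h1, h2]
  | pred k ih =>
      rw [show (-(k:ℤ) - 1 : ℤ) = (-(k:ℤ)) - 1 from rfl, zpow_pred_apply, zpow_pred_apply,
        ih.1, ih.2]
      simp only [Int.even_sub_one]
      by_cases hk : Even (-(k:ℤ)) <;> simp [hk, hb1, hb2]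

end Dynamics

section Pieces

variable {N : ℕ} {t : Fin N → ℝ}

lemma tE_eq {i : ℕ} (h1 : 1 ≤ i) (h2 : i ≤ N) :
    tE N t i = ((t ⟨i - 1, by omega⟩ : ℝ) : EReal) := dif_pos ⟨h1, h2⟩

lemma tE_zero : tE N t 0 = ⊥ := by
  rw [tE, dif_neg (by omega), if_pos rfl]

lemma tE_top {i : ℕ} (h : N < i) (h0 : i ≠ 0) : tE N t i = ⊤ := by
  rw [tE, dif_neg (by omega), if_neg h0]

lemma t_not_mem_openPiece (ht : StrictMono t) {a0 : ℕ} (ha0 : a0 ≤ N) (j : Fin N) :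
    t j ∉ openPiece N t a0 := by
  rintro ⟨hl, hr⟩
  by_cases h1 : 1 ≤ a0
  · rw [tE_eq h1 ha0, EReal.coe_lt_coe_iff] at hl
    have hj1 : a0 - 1 < (j : ℕ) := ht.lt_iff_lt.mp hl
    by_cases h2 : a0 + 1 ≤ N
    · rw [tE_eq (by omega) h2, EReal.coe_lt_coe_iff] at hr
      have hj2 : (j : ℕ) < a0 + 1 - 1 := ht.lt_iff_lt.mp hr
      omega
    · have := j.isLt; omega
  · have ha00 : a0 = 0 := by omega
    subst ha00
    by_cases h2 : 1 ≤ N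
    · rw [tE_eq le_rfl h2, EReal.coe_lt_coe_iff] at hr
      have hj2 : (j : ℕ) < 0 := ht.lt_iff_lt.mp hr
      omega
    · have := j.isLt; omega

lemma between_mem_openPiece {a0 : ℕ} {z w u : ℝ} (hz : z ∈ openPiece N t a0)
    (hw : w ∈ openPiece N t a0) (h1 : min z w ≤ u) (h2 : u ≤ max z w) :
    u ∈ openPiece N t a0 := by
  obtain ⟨hz1, hz2⟩ := hz
  obtain ⟨hw1, hw2⟩ := hw
  constructor
  · have hm : tE N t a0 < ((min z w : ℝ) : EReal) := by
      rcases min_choice z w with h | h <;> rw [h] <;> assumption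
    exact lt_of_lt_of_le hm (EReal.coe_le_coe_iff.mpr h1)
  · have hm : ((max z w : ℝ) : EReal) < tE N t (a0 + 1) := by
      rcases max_choice z w with h | h <;> rw [h] <;> assumption
    exact lt_of_le_of_lt (EReal.coe_le_coe_iff.mpr h2) hm

lemma rel_of_openPiece (ht : StrictMono t) {a0 : ℕ} (ha0 : a0 ≤ N) {z w : ℝ}
    (hz : z ∈ openPiece N t a0) (hw : w ∈ openPiece N t a0) :
    Rel (Set.range t) z w := by
  refine Or.inr ⟨?_, ?_, ?_⟩
  · rintro ⟨j, rfl⟩; exact t_not_mem_openPiece ht ha0 j hz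
  · rintro ⟨j, rfl⟩; exact t_not_mem_openPiece ht ha0 j hw
  · rintro u ⟨j, rfl⟩ ⟨hu1, hu2⟩
    exact t_not_mem_openPiece ht ha0 j (between_mem_openPiece hz hw hu1 hu2)

end Pieces

end PaperTRS
namespace PaperTRS

lemma master18 (N : ℕ) (t : Fin N → ℝ) (ht : StrictMono t)
    (a0 : ℕ) (ha0 : a0 ≤ N) (s1 s2 : ℝ) (hs12 : s1 < s2)
    (hs1 : s1 ∈ openPiece N t a0) (hs2 : s2 ∈ openPiece N t a0)
    (I1 I2 I3 : Set ℝ)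
    (hI1 : I1 = {x : ℝ | tE N t a0 < (x : EReal) ∧ x < s1})
    (hI2 : I2 = Set.Ioo s1 s2)
    (hI3 : I3 = {x : ℝ | s2 < x ∧ (x : EReal) < tE N t (a0 + 1)})
    (σ : Equiv.Perm ℝ)
    (hm1 : σ '' I1 = I2) (hm2 : σ '' I2 = I3) (hm3 : σ '' I3 = I1)
    (hm4 : σ s1 = s2) (hm5 : σ s2 = s1) (n : ℤ) (x : ℝ) :
    x ∈ Sep (pcAlgOn (Set.range t ∪ {s1, s2})) σ n ↔
      (x ∈ Sep (pcAlgOn (Set.range t)) σ n ∨ ((¬((3:ℤ) ∣ n)) ∧ x ∈ I1 ∪ I2 ∪ I3) ∨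
      (Odd n ∧ (x = s1 ∨ x = s2))) := by
  have m1 : ∀ z, z ∈ I1 ↔ tE N t a0 < (z:EReal) ∧ z < s1 := fun z => by rw [hI1]; rfl
  have m2 : ∀ z, z ∈ I2 ↔ s1 < z ∧ z < s2 := fun z => by rw [hI2]; exact Iff.rfl
  have m3 : ∀ z, z ∈ I3 ↔ s2 < z ∧ (z:EReal) < tE N t (a0+1) := fun z => by rw [hI3]; rfl
  have hsub1 : I1 ⊆ openPiece N t a0 := fun z hz =>
    ⟨((m1 z).mp hz).1, lt_trans (EReal.coe_lt_coe_iff.mpr ((m1 z).mp hz).2) hs1.2⟩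
  have hsub2 : I2 ⊆ openPiece N t a0 := fun z hz =>
    ⟨lt_trans hs1.1 (EReal.coe_lt_coe_iff.mpr ((m2 z).mp hz).1),
     lt_trans (EReal.coe_lt_coe_iff.mpr ((m2 z).mp hz).2) hs2.2⟩
  have hsub3 : I3 ⊆ openPiece N t a0 := fun z hz =>
    ⟨lt_trans hs2.1 (EReal.coe_lt_coe_iff.mpr ((m3 z).mp hz).1), ((m3 z).mp hz).2⟩
  have hopd : ∀ z, z ∈ openPiece N t a0 ↔
      (z ∈ I1 ∨ z ∈ I2 ∨ z ∈ I3 ∨ z = s1 ∨ z = s2) := by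
    intro z
    constructor
    · rintro ⟨hl, hr⟩
      rcases lt_trichotomy z s1 with h | h | h
      · exact Or.inl ((m1 z).mpr ⟨hl, h⟩)
      · exact Or.inr (Or.inr (Or.inr (Or.inl h)))
      rcases lt_trichotomy z s2 with h' | h' | h'
      · exact Or.inr (Or.inl ((m2 z).mpr ⟨h, h'⟩))
      · exact Or.inr (Or.inr (Or.inr (Or.inr h')))
      · exact Or.inr (Or.inr (Or.inl ((m3 z).mpr ⟨h', hr⟩)))
    · rintro (h | h | h | rfl | rfl)
      · exact hsub1 h
      · exact hsub2 h
      · exact hsub3 h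
      · exact hs1
      · exact hs2
  -- order facts
  have f1 : ∀ z ∈ I1, z < s1 := fun z hz => ((m1 z).mp hz).2
  have f2a : ∀ z ∈ I2, s1 < z := fun z hz => ((m2 z).mp hz).1
  have f2b : ∀ z ∈ I2, z < s2 := fun z hz => ((m2 z).mp hz).2
  have f3 : ∀ z ∈ I3, s2 < z := fun z hz => ((m3 z).mp hz).1
  -- the three classes
  set P : ZMod 3 → Set ℝ := fun c => if c = 0 then I1 else if c = 1 then I2 else I3 with hP
  have hP0 : P 0 = I1 := if_pos rfl
  have hP1 : P 1 = I2 := (if_neg (by decide)).trans (if_pos rfl)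
  have hP2 : P 2 = I3 := (if_neg (by decide)).trans (if_neg (by decide))
  have hPcases : ∀ c : ZMod 3, c = 0 ∨ c = 1 ∨ c = 2 := by decide
  have hPf : ∀ c z, z ∈ P c → σ z ∈ P (c + 1) := by
    intro c z hz
    rcases hPcases c with rfl | rfl | rfl
    · rw [hP0] at hz
      rw [show (0:ZMod 3)+1 = 1 by decide, hP1, ← hm1]
      exact Set.mem_image_of_mem σ hz
    · rw [hP1] at hz
      rw [show (1:ZMod 3)+1 = 2 by decide, hP2, ← hm2]
      exact Set.mem_image_of_mem σ hz
    · rw [hP2] at hz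
      rw [show (2:ZMod 3)+1 = 0 by decide, hP0, ← hm3]
      exact Set.mem_image_of_mem σ hz
  have hPb : ∀ c z, z ∈ P c → σ⁻¹ z ∈ P (c - 1) := by
    intro c z hz
    rcases hPcases c with rfl | rfl | rfl
    · rw [hP0, ← hm3] at hz
      obtain ⟨w, hw, rfl⟩ := hz
      rw [show (0:ZMod 3)-1 = 2 by decide, hP2, ← Equiv.Perm.mul_apply, inv_mul_cancel, Equiv.Perm.one_apply]
      exact hw
    · rw [hP1, ← hm1] at hz
      obtain ⟨w, hw, rfl⟩ := hz
      rw [show (1:ZMod 3)-1 = 0 by decide, hP0, ← Equiv.Perm.mul_apply, inv_mul_cancel, Equiv.Perm.one_apply]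
      exact hw
    · rw [hP2, ← hm2] at hz
      obtain ⟨w, hw, rfl⟩ := hz
      rw [show (2:ZMod 3)-1 = 1 by decide, hP1, ← Equiv.Perm.mul_apply, inv_mul_cancel, Equiv.Perm.one_apply]
      exact hw
  have hclass := zpow_mem_class σ P hPf hPb
  have hPsub : ∀ c, P c ⊆ openPiece N t a0 := by
    intro c
    rcases hPcases c with rfl | rfl | rfl
    · rw [hP0]; exact hsub1
    · rw [hP1]; exact hsub2
    · rw [hP2]; exact hsub3
  have hop_inv : ∀ (m : ℤ) z, z ∈ openPiece N t a0 → (σ ^ m) z ∈ openPiece N t a0 := by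
    intro m z hz
    rcases (hopd z).mp hz with h | h | h | heq | heq
    · exact hPsub _ (hclass m 0 z (by rw [hP0]; exact h))
    · exact hPsub _ (hclass m 1 z (by rw [hP1]; exact h))
    · exact hPsub _ (hclass m 2 z (by rw [hP2]; exact h))
    · rw [heq, (zpow_swap σ s1 s2 hm4 hm5 m).1]
      split_ifs
      · exact hs1
      · exact hs2
    · rw [heq, (zpow_swap σ s1 s2 hm4 hm5 m).2]
      split_ifs
      · exact hs2
      · exact hs1
  -- non-membership in T'
  have hnotT' : ∀ z, z ∈ openPiece N t a0 → z ≠ s1 → z ≠ s2 →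
      z ∉ Set.range t ∪ {s1, s2} := by
    rintro z hz hz1 hz2 (⟨j, rfl⟩ | hzz)
    · exact t_not_mem_openPiece ht ha0 j hz
    · rcases Set.mem_insert_iff.mp hzz with h | h
      · exact hz1 h
      · exact hz2 (Set.mem_singleton_iff.mp h)
  -- Rel within each subinterval
  have relcomm : ∀ {z w : ℝ}, z ∈ openPiece N t a0 → w ∈ openPiece N t a0 →
      z ≠ s1 → z ≠ s2 → w ≠ s1 → w ≠ s2 →
      (s1 ∉ Set.Icc (min z w) (max z w)) → (s2 ∉ Set.Icc (min z w) (max z w)) →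
      Rel (Set.range t ∪ {s1, s2}) z w := by
    intro z w hz hw hz1 hz2 hw1 hw2 hic1 hic2
    refine Or.inr ⟨hnotT' z hz hz1 hz2, hnotT' w hw hw1 hw2, ?_⟩
    rintro u (⟨j, rfl⟩ | hu) hic
    · exact t_not_mem_openPiece ht ha0 j (between_mem_openPiece hz hw hic.1 hic.2)
    · rcases Set.mem_insert_iff.mp hu with rfl | h
      · exact hic1 hic
      · rw [Set.mem_singleton_iff.mp h] at hic
        exact hic2 hic
  have maxlt : ∀ {z w c : ℝ}, z < c → w < c → max z w < c := fun h1 h2 =>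
    max_lt h1 h2
  have ltmin : ∀ {z w c : ℝ}, c < z → c < w → c < min z w := fun h1 h2 =>
    lt_min h1 h2
  have rel1 : ∀ z w, z ∈ I1 → w ∈ I1 → Rel (Set.range t ∪ {s1, s2}) z w := by
    intro z w hz hw
    have hzs1 := f1 z hz; have hws1 := f1 w hw
    refine relcomm (hsub1 hz) (hsub1 hw) hzs1.ne (lt_trans hzs1 hs12).ne
      hws1.ne (lt_trans hws1 hs12).ne ?_ ?_
    · intro hic; exact absurd hic.2 (not_le.mpr (maxlt hzs1 hws1))
    · intro hic
      exact absurd hic.2 (not_le.mpr (maxlt (lt_trans hzs1 hs12) (lt_trans hws1 hs12)))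
  have rel2 : ∀ z w, z ∈ I2 → w ∈ I2 → Rel (Set.range t ∪ {s1, s2}) z w := by
    intro z w hz hw
    refine relcomm (hsub2 hz) (hsub2 hw) (f2a z hz).ne' (f2b z hz).ne
      (f2a w hw).ne' (f2b w hw).ne ?_ ?_
    · intro hic; exact absurd hic.1 (not_le.mpr (ltmin (f2a z hz) (f2a w hw)))
    · intro hic; exact absurd hic.2 (not_le.mpr (maxlt (f2b z hz) (f2b w hw)))
  have rel3 : ∀ z w, z ∈ I3 → w ∈ I3 → Rel (Set.range t ∪ {s1, s2}) z w := by
    intro z w hz hw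
    refine relcomm (hsub3 hz) (hsub3 hw) (lt_trans hs12 (f3 z hz)).ne' (f3 z hz).ne'
      (lt_trans hs12 (f3 w hw)).ne' (f3 w hw).ne' ?_ ?_
    · intro hic
      exact absurd hic.1 (not_le.mpr (ltmin (lt_trans hs12 (f3 z hz)) (lt_trans hs12 (f3 w hw))))
    · intro hic; exact absurd hic.1 (not_le.mpr (ltmin (f3 z hz) (f3 w hw)))
  have relsame : ∀ c z w, z ∈ P c → w ∈ P c → Rel (Set.range t ∪ {s1, s2}) z w := by
    intro c z w hz hw
    rcases hPcases c with rfl | rfl | rfl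
    · rw [hP0] at hz hw; exact rel1 z w hz hw
    · rw [hP1] at hz hw; exact rel2 z w hz hw
    · rw [hP2] at hz hw; exact rel3 z w hz hw
  -- different subintervals are separated
  have keylem : ∀ z w, ((z ∈ I1 ∧ w ∈ I2) ∨ (z ∈ I1 ∧ w ∈ I3) ∨ (z ∈ I2 ∧ w ∈ I3)) →
      ¬ Rel (Set.range t ∪ {s1, s2}) z w := by
    rintro z w h hrel
    have hs1T : s1 ∈ Set.range t ∪ {s1, s2} := Or.inr (Set.mem_insert _ _)
    have hs2T : s2 ∈ Set.range t ∪ {s1, s2} :=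
      Or.inr (Set.mem_insert_iff.mpr (Or.inr rfl))
    rcases h with ⟨hz, hw⟩ | ⟨hz, hw⟩ | ⟨hz, hw⟩
    · have hzw : z < w := lt_trans (f1 z hz) (f2a w hw)
      rcases hrel with heq | ⟨_, _, hb⟩
      · exact absurd hzw (heq ▸ lt_irrefl _)
      · exact hb s1 hs1T ⟨by rw [min_eq_left hzw.le]; exact (f1 z hz).le,
          by rw [max_eq_right hzw.le]; exact (f2a w hw).le⟩
    · have hzw : z < w := lt_trans (lt_trans (f1 z hz) hs12) (f3 w hw)
      rcases hrel with heq | ⟨_, _, hb⟩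
      · exact absurd hzw (heq ▸ lt_irrefl _)
      · exact hb s1 hs1T ⟨by rw [min_eq_left hzw.le]; exact (f1 z hz).le,
          by rw [max_eq_right hzw.le]; exact (lt_trans hs12 (f3 w hw)).le⟩
    · have hzw : z < w := lt_trans (f2b z hz) (f3 w hw)
      rcases hrel with heq | ⟨_, _, hb⟩
      · exact absurd hzw (heq ▸ lt_irrefl _)
      · exact hb s2 hs2T ⟨by rw [min_eq_left hzw.le]; exact (f2b z hz).le,
          by rw [max_eq_right hzw.le]; exact (f3 w hw).le⟩
  have notdiff : ∀ (c c' : ZMod 3) z w, z ∈ P c → w ∈ P c' → c ≠ c' →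
      ¬ Rel (Set.range t ∪ {s1, s2}) z w := by
    intro c c' z w hz hw hne
    rcases hPcases c with rfl | rfl | rfl <;> rcases hPcases c' with rfl | rfl | rfl
    · exact absurd rfl hne
    · rw [hP0] at hz; rw [hP1] at hw
      exact keylem z w (Or.inl ⟨hz, hw⟩)
    · rw [hP0] at hz; rw [hP2] at hw
      exact keylem z w (Or.inr (Or.inl ⟨hz, hw⟩))
    · rw [hP1] at hz; rw [hP0] at hw
      exact fun hrel => keylem w z (Or.inl ⟨hw, hz⟩) hrel.symm
    · exact absurd rfl hne
    · rw [hP1] at hz; rw [hP2] at hw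
      exact keylem z w (Or.inr (Or.inr ⟨hz, hw⟩))
    · rw [hP2] at hz; rw [hP0] at hw
      exact fun hrel => keylem w z (Or.inr (Or.inl ⟨hw, hz⟩)) hrel.symm
    · rw [hP2] at hz; rw [hP1] at hw
      exact fun hrel => keylem w z (Or.inr (Or.inr ⟨hw, hz⟩)) hrel.symm
    · exact absurd rfl hne
  -- main case analysis
  rw [mem_Sep_iff, mem_Sep_iff]
  have hyx : (σ ^ n)⁻¹ x = (σ ^ (-n)) x := by rw [zpow_neg]
  by_cases hxop : x ∈ openPiece N t a0
  · have hyop : (σ ^ n)⁻¹ x ∈ openPiece N t a0 := by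
      rw [hyx]; exact hop_inv (-n) x hxop
    have hSepA : Rel (Set.range t) x ((σ ^ n)⁻¹ x) :=
      rel_of_openPiece ht ha0 hxop hyop
    have icase : ∀ c : ZMod 3, x ∈ P c → x ∈ I1 ∪ I2 ∪ I3 → x ≠ s1 → x ≠ s2 →
        (¬ Rel (Set.range t ∪ {s1, s2}) x ((σ ^ n)⁻¹ x) ↔
          (¬ Rel (Set.range t) x ((σ ^ n)⁻¹ x) ∨ ((¬((3:ℤ) ∣ n)) ∧ x ∈ I1 ∪ I2 ∪ I3) ∨
          (Odd n ∧ (x = s1 ∨ x = s2)))) := by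
      intro c hxP hxU hxs1 hxs2
      have hyP : (σ ^ n)⁻¹ x ∈ P (c + ((-n : ℤ) : ZMod 3)) := by
        rw [hyx]; exact hclass (-n) c x hxP
      constructor
      · intro hL
        refine Or.inr (Or.inl ⟨?_, hxU⟩)
        intro hdvd
        have h0 : ((-n : ℤ) : ZMod 3) = 0 := by
          rw [ZMod.intCast_zmod_eq_zero_iff_dvd]; exact dvd_neg.mpr hdvd
        rw [h0, add_zero] at hyP
        exact hL (relsame c x _ hxP hyP)
      · rintro (hA | ⟨h3, _⟩ | ⟨_, h | h⟩)
        · exact absurd hSepA hA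
        · refine notdiff c _ x _ hxP hyP ?_
          intro h
          have : ((-n : ℤ) : ZMod 3) = 0 := by
            have := h.symm
            rwa [add_eq_left] at this
          rw [ZMod.intCast_zmod_eq_zero_iff_dvd, dvd_neg] at this
          exact h3 this
        · exact absurd h hxs1
        · exact absurd h hxs2
    rcases (hopd x).mp hxop with hx1 | hx2 | hx3 | hxs | hxs
    · exact icase 0 (by rw [hP0]; exact hx1) (Or.inl (Or.inl hx1))
        (f1 x hx1).ne (lt_trans (f1 x hx1) hs12).ne
    · exact icase 1 (by rw [hP1]; exact hx2) (Or.inl (Or.inr hx2))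
        (f2a x hx2).ne' (f2b x hx2).ne
    · exact icase 2 (by rw [hP2]; exact hx3) (Or.inr hx3)
        (lt_trans hs12 (f3 x hx3)).ne' (f3 x hx3).ne'
    · -- x = s1
      have hs1U : s1 ∉ I1 ∪ I2 ∪ I3 := by
        rintro ((h | h) | h)
        · exact absurd (f1 _ h) (lt_irrefl _)
        · exact absurd (f2a _ h) (lt_irrefl _)
        · exact absurd (lt_trans hs12 (f3 _ h)) (lt_irrefl _)
      have hyval : (σ ^ n)⁻¹ x = if Even n then s1 else s2 := by
        rw [hyx, hxs, (zpow_swap σ s1 s2 hm4 hm5 (-n)).1]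
        simp [even_neg]
      rcases Int.even_or_odd n with he | ho
      · rw [hyval, if_pos he]
        constructor
        · intro h; exact absurd (Or.inl hxs) h
        · rintro (h | ⟨_, hu⟩ | ⟨ho', _⟩)
          · exact absurd (Or.inl hxs) h
          · rw [hxs] at hu; exact absurd hu hs1U
          · exact absurd ho' (Int.not_odd_iff_even.mpr he)
      · rw [hyval, if_neg (Int.not_even_iff_odd.mpr ho)]
        have hLHS : ¬ Rel (Set.range t ∪ {s1, s2}) x s2 := by
          rintro (heq | ⟨hxt, _, _⟩)
          · exact hs12.ne (hxs.symm.trans heq)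
          · rw [hxs] at hxt
            exact hxt (Or.inr (Set.mem_insert _ _))
        constructor
        · intro _; exact Or.inr (Or.inr ⟨ho, Or.inl hxs⟩)
        · intro _; exact hLHS
    · -- x = s2
      have hs2U : s2 ∉ I1 ∪ I2 ∪ I3 := by
        rintro ((h | h) | h)
        · exact absurd (lt_trans (f1 _ h) hs12) (lt_irrefl _)
        · exact absurd (f2b _ h) (lt_irrefl _)
        · exact absurd (f3 _ h) (lt_irrefl _)
      have hyval : (σ ^ n)⁻¹ x = if Even n then s2 else s1 := by
        rw [hyx, hxs, (zpow_swap σ s1 s2 hm4 hm5 (-n)).2]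
        simp [even_neg]
      rcases Int.even_or_odd n with he | ho
      · rw [hyval, if_pos he]
        constructor
        · intro h; exact absurd (Or.inl hxs) h
        · rintro (h | ⟨_, hu⟩ | ⟨ho', _⟩)
          · exact absurd (Or.inl hxs) h
          · rw [hxs] at hu; exact absurd hu hs2U
          · exact absurd ho' (Int.not_odd_iff_even.mpr he)
      · rw [hyval, if_neg (Int.not_even_iff_odd.mpr ho)]
        have hLHS : ¬ Rel (Set.range t ∪ {s1, s2}) x s1 := by
          rintro (heq | ⟨hxt, _, _⟩)
          · exact hs12.ne (heq.symm.trans hxs)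
          · rw [hxs] at hxt
            exact hxt (Or.inr (Set.mem_insert_iff.mpr (Or.inr rfl)))
        constructor
        · intro _; exact Or.inr (Or.inr ⟨ho, Or.inr hxs⟩)
        · intro _; exact hLHS
  · -- x outside the interval
    have hyop : (σ ^ n)⁻¹ x ∉ openPiece N t a0 := by
      intro hy
      apply hxop
      have := hop_inv n _ hy
      rwa [← Equiv.Perm.mul_apply, mul_inv_cancel, Equiv.Perm.one_apply] at this
    have hxU : x ∉ I1 ∪ I2 ∪ I3 := by
      rintro ((h | h) | h)
      · exact hxop (hsub1 h)
      · exact hxop (hsub2 h)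
      · exact hxop (hsub3 h)
    have hequiv : Rel (Set.range t) x ((σ ^ n)⁻¹ x) ↔
        Rel (Set.range t ∪ {s1, s2}) x ((σ ^ n)⁻¹ x) := by
      constructor
      · intro hrel
        rcases hrel with heq | ⟨hxT, hyT, hb⟩
        · exact Or.inl heq
        · refine Or.inr ⟨?_, ?_, ?_⟩
          · rintro (h | h)
            · exact hxT h
            · rcases Set.mem_insert_iff.mp h with rfl | h
              · exact hxop hs1
              · rw [Set.mem_singleton_iff.mp h] at hxop
                exact hxop hs2
          · rintro (h | h)
            · exact hyT h
            · rcases Set.mem_insert_iff.mp h with h' | h'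
              · exact hyop (h' ▸ hs1)
              · exact hyop ((Set.mem_singleton_iff.mp h') ▸ hs2)
          · rintro u (hu | hu) hic
            · exact hb u hu hic
            · have huop : u ∈ openPiece N t a0 := by
                rcases Set.mem_insert_iff.mp hu with rfl | h'
                · exact hs1
                · exact (Set.mem_singleton_iff.mp h') ▸ hs2
              obtain ⟨hic1, hic2⟩ := hic
              have hmnotop : min x ((σ ^ n)⁻¹ x) ∉ openPiece N t a0 := by
                rcases min_choice x ((σ ^ n)⁻¹ x) with h' | h' <;> rw [h']
                · exact hxop
                · exact hyop
              have hle : ((min x ((σ ^ n)⁻¹ x) : ℝ) : EReal) ≤ tE N t a0 := by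
                by_contra hlt
                push_neg at hlt
                exact hmnotop ⟨hlt, lt_of_le_of_lt (EReal.coe_le_coe_iff.mpr hic1) huop.2⟩
              by_cases hN : 1 ≤ a0
              · rw [tE_eq hN ha0] at hle
                have hult : (t ⟨a0 - 1, by omega⟩ : ℝ) < u := by
                  have := huop.1
                  rw [tE_eq hN ha0] at this
                  exact EReal.coe_lt_coe_iff.mp this
                exact hb (t ⟨a0 - 1, by omega⟩) ⟨_, rfl⟩
                  ⟨EReal.coe_le_coe_iff.mp hle, le_trans hult.le hic2⟩
              · have ha00 : a0 = 0 := by omega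
                rw [ha00, tE_zero] at hle
                exact EReal.coe_ne_bot _ (le_bot_iff.mp hle)
      · intro hrel
        exact hrel.mono Set.subset_union_left
    rw [← hequiv]
    constructor
    · exact fun h => Or.inl h
    · rintro (h | ⟨_, hU⟩ | ⟨_, rfl | rfl⟩)
      · exact h
      · exact absurd hU hxU
      · exact absurd hs1 hxop
      · exact absurd hs2 hxop

end PaperTRS
namespace PaperTRS

/-- two jump points `s₁ < s₂` added into one interval `I_{α₀}`, with the three
open subintervals permuted in a 3-cycle by `σ` and the two jump points interchanged. Then
`Sepⁿ_{𝒜_S} = Sepⁿ_𝒜 ∪ (I⁴ ∪ I⁵)` if `n` is odd and `3 ∣ n`;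
`Sepⁿ_{𝒜_S} = Sepⁿ_𝒜 ∪ (I¹ ∪ I² ∪ I³)` (together with `I⁴ ∪ I⁵` when `n` is odd) if `3 ∤ n`;
and `Sepⁿ_{𝒜_S} = Sepⁿ_𝒜` if `n` is even and `3 ∣ n`. Consequently
`𝒜_S' = 𝒜' \ ({Σ fₙδⁿ : fₙ ≢ 0 on I¹ ∪ I² ∪ I³ for some n with 3 ∤ n} ∪
{Σ fₙδⁿ : f_{2n+1} ≢ 0 on I⁴ ∪ I⁵ for some n})`. -/
theorem statement18 (N : ℕ) (t : Fin N → ℝ) (ht : StrictMono t)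
    (a0 : ℕ) (ha0 : a0 ≤ N) (s1 s2 : ℝ) (hs12 : s1 < s2)
    (hs1 : s1 ∈ openPiece N t a0) (hs2 : s2 ∈ openPiece N t a0)
    (I1 I2 I3 : Set ℝ)
    (hI1 : I1 = {x : ℝ | tE N t a0 < (x : EReal) ∧ x < s1})
    (hI2 : I2 = Set.Ioo s1 s2)
    (hI3 : I3 = {x : ℝ | s2 < x ∧ (x : EReal) < tE N t (a0 + 1)})
    (σ : Equiv.Perm ℝ)
    (h1 : AlgInvariant (pcAlgOn (Set.range t)) σ)
    (h2 : AlgInvariant (pcAlgOn (Set.range t)) σ.symm)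
    (h3 : AlgInvariant (pcAlgOn (Set.range t ∪ {s1, s2})) σ)
    (h4 : AlgInvariant (pcAlgOn (Set.range t ∪ {s1, s2})) σ.symm)
    (hm1 : σ '' I1 = I2) (hm2 : σ '' I2 = I3) (hm3 : σ '' I3 = I1)
    (hm4 : σ s1 = s2) (hm5 : σ s2 = s1) :
    (∀ n : ℤ,
      (Odd n → (3 : ℤ) ∣ n →
        Sep (pcAlgOn (Set.range t ∪ {s1, s2})) σ n =
          Sep (pcAlgOn (Set.range t)) σ n ∪ ({s1} ∪ {s2})) ∧
      (¬((3 : ℤ) ∣ n) → Odd n →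
        Sep (pcAlgOn (Set.range t ∪ {s1, s2})) σ n =
          Sep (pcAlgOn (Set.range t)) σ n ∪ (I1 ∪ I2 ∪ I3) ∪ ({s1} ∪ {s2})) ∧
      (¬((3 : ℤ) ∣ n) → Even n →
        Sep (pcAlgOn (Set.range t ∪ {s1, s2})) σ n =
          Sep (pcAlgOn (Set.range t)) σ n ∪ (I1 ∪ I2 ∪ I3)) ∧
      (Even n → (3 : ℤ) ∣ n →
        Sep (pcAlgOn (Set.range t ∪ {s1, s2})) σ n =
          Sep (pcAlgOn (Set.range t)) σ n)) ∧
    commutant (pcAlgOn (Set.range t ∪ {s1, s2})) (pcAlgOn (Set.range t ∪ {s1, s2})) σ =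
      commutant (pcAlgOn (Set.range t)) (pcAlgOn (Set.range t ∪ {s1, s2})) σ \
        ({f : ℤ →₀ (ℝ → ℂ) | ∃ n : ℤ, ¬((3 : ℤ) ∣ n) ∧
            ¬(∀ x ∈ I1 ∪ I2 ∪ I3, f n x = 0)} ∪
          {f : ℤ →₀ (ℝ → ℂ) | ∃ n : ℤ,
            ¬(∀ x ∈ ({s1} ∪ {s2} : Set ℝ), f (2 * n + 1) x = 0)}) := by
  have master := fun (n : ℤ) (x : ℝ) =>
    master18 N t ht a0 ha0 s1 s2 hs12 hs1 hs2 I1 I2 I3 hI1 hI2 hI3 σ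
      hm1 hm2 hm3 hm4 hm5 n x
  constructor
  · intro n
    refine ⟨?_, ?_, ?_, ?_⟩
    · intro hodd hdvd
      ext x
      simp only [Set.mem_union, Set.mem_singleton_iff, master n x]
      tauto
    · intro hdvd hodd
      ext x
      simp only [Set.mem_union, Set.mem_singleton_iff, master n x]
      tauto
    · intro hdvd heven
      have hnodd : ¬ Odd n := Int.not_odd_iff_even.mpr heven
      ext x
      simp only [Set.mem_union, Set.mem_singleton_iff, master n x]
      tauto
    · intro heven hdvd
      have hnodd : ¬ Odd n := Int.not_odd_iff_even.mpr heven
      ext x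
      simp only [Set.mem_union, Set.mem_singleton_iff, master n x]
      tauto
  · ext f
    rw [Set.mem_diff, mem_commutant_iff, mem_commutant_iff]
    constructor
    · rintro ⟨hic, hv⟩
      refine ⟨⟨hic, ?_⟩, ?_⟩
      · intro n x hx
        exact hv n x ((master n x).mpr (Or.inl hx))
      · rintro (⟨n, hd3, hnz⟩ | ⟨n, hnz⟩)
        · exact hnz fun x hxU => hv n x ((master n x).mpr (Or.inr (Or.inl ⟨hd3, hxU⟩)))
        · apply hnz
          intro x hxE
          have hodd : Odd (2*n+1) := ⟨n, by ring⟩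
          refine hv (2*n+1) x ((master _ x).mpr (Or.inr (Or.inr ⟨hodd, ?_⟩)))
          rcases hxE with h | h
          · exact Or.inl (Set.mem_singleton_iff.mp h)
          · exact Or.inr (Set.mem_singleton_iff.mp h)
    · rintro ⟨⟨hic, hvA⟩, hns⟩
      refine ⟨hic, ?_⟩
      intro n x hx
      rcases (master n x).mp hx with h | ⟨hd3, hxU⟩ | ⟨hodd, hxs⟩
      · exact hvA n x h
      · by_contra hnz
        exact hns (Or.inl ⟨n, hd3, fun hall => hnz (hall x hxU)⟩)
      · by_contra hnz
        obtain ⟨m, hm⟩ := hodd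
        refine hns (Or.inr ⟨m, fun hall => hnz ?_⟩)
        have hx0 : f (2*m+1) x = 0 := by
          apply hall x
          rcases hxs with rfl | rfl
          · exact Or.inl rfl
          · exact Or.inr rfl
        rw [hm]
        exact hx0

end PaperTRS
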